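/- A connected multigraph on n ≥ 2 vertices in which some vertex v is joined to another vertex w by exactly one edge, and where removing that edge separates v from w, remains non-edge-biconnected after splitting v into two vertices and joining them by one new edge: in every resulting graph, w is joined by exactly one edge to exactly one of the two new vertices and shares no cycle with it. -/

import Mathlib

structure Multigraph (V : Type) (E : Type) where
  ends : E → Sym2 V

namespace Multigraph

variable {V E V' E' : Type}

/-- Two vertices are adjacent if some edge joins them. -/
def Adj (G : Multigraph V E) (u v : V) : Prop := ∃ e : E, G.ends e = s(u, v)

/-- Reachability: joined by a path (reflexive-transitive closure of adjacency). -/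
def Reachable (G : Multigraph V E) : V → V → Prop := Relation.ReflTransGen G.Adj

/-- A multigraph is connected if every pair of vertices is joined by a path. -/
def Connected (G : Multigraph V E) : Prop := ∀ u v : V, G.Reachable u v

/-- Number of connected components. -/
noncomputable def numComponents (G : Multigraph V E) : ℕ := Nat.card (Quot G.Reachable)

/-- Add a new edge with given pair of endpoints; the new edge is `none`. -/
def addEdge (G : Multigraph V E) (p : Sym2 V) : Multigraph V (Option E) :=
  ⟨fun e => e.elim p G.ends⟩

/-- Delete the edge `e`. -/
def deleteEdge (G : Multigraph V E) (e : E) : Multigraph V {f : E // f ≠ e} :=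
  ⟨fun f => G.ends f.1⟩

/-- An edge of a connected multigraph is a bridge if its removal disconnects the graph. -/
def IsBridge (G : Multigraph V E) (e : E) : Prop := ¬ (G.deleteEdge e).Connected

/-- Edge-biconnected: connected and with no bridge. -/
def Biconnected (G : Multigraph V E) : Prop := G.Connected ∧ ∀ e : E, ¬ G.IsBridge e

/-- A multigraph is simple if it has no loops and no multiple edges. -/
def Simple (G : Multigraph V E) : Prop :=
  (∀ e : E, ¬ (G.ends e).IsDiag) ∧ ∀ e f : E, G.ends e = G.ends f → e = f

/-- `f`, `g` describe a cycle: a closed walk with distinct vertices and distinct edges.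
A loop gives a cycle of length one, a pair of parallel edges a cycle of length two. -/
def IsCycleOn (G : Multigraph V E) (n : ℕ) (f : ZMod n → V) (g : ZMod n → E) : Prop :=
  0 < n ∧ Function.Injective f ∧ Function.Injective g ∧
    ∀ i : ZMod n, G.ends (g i) = s(f i, f (i + 1))

/-- `C` is the edge set of a cycle of `G`. -/
def IsCycleEdgeSet (G : Multigraph V E) (C : Set E) : Prop :=
  ∃ (n : ℕ) (f : ZMod n → V) (g : ZMod n → E), G.IsCycleOn n f g ∧ C = Set.range g

def HasCycle (G : Multigraph V E) : Prop := ∃ C : Set E, G.IsCycleEdgeSet C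

/-- A tree is a connected multigraph with no cycles. -/
def IsTree (G : Multigraph V E) : Prop := G.Connected ∧ ¬ G.HasCycle

/-- The cycle space: the span over `ZMod 2` of the indicator vectors of edge sets of cycles,
inside the space of subsets of `E` with symmetric difference (i.e. `E → ZMod 2`). -/
noncomputable def cycleSpace (G : Multigraph V E) : Submodule (ZMod 2) (E → ZMod 2) :=
  Submodule.span (ZMod 2)
    { x | ∃ C : Set E, G.IsCycleEdgeSet C ∧ x = C.indicator (fun _ => (1 : ZMod 2)) }

/-- When splitting the vertex `v` into `some v` and `none`, an edge-end at `u : V`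
may be reassigned to `w : Option V` exactly when this holds. -/
def SplitEnd (v u : V) (w : Option V) : Prop :=
  (u = v ∧ (w = some v ∨ w = none)) ∨ (u ≠ v ∧ w = some u)

/-- `H` is obtained from `G` by splitting the vertex `v` into two vertices `some v` and
`none`, distributing the edge-ends formerly incident to `v` between the two in some way
(no new edge added yet). -/
def IsSplitAssign (G : Multigraph V E) (v : V) (H : Multigraph (Option V) E) : Prop :=
  ∀ e : E, ∃ (a b : V) (a' b' : Option V),
    G.ends e = s(a, b) ∧ H.ends e = s(a', b') ∧ SplitEnd v a a' ∧ SplitEnd v b b'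

/-- `G'` is obtained from `G` by splitting the vertex `v` in two, distributing the
edge-ends incident to `v` between the two new vertices in some way, and adding one
new edge joining the two new vertices. -/
def IsSplitAt (G : Multigraph V E) (v : V) (G' : Multigraph (Option V) (Option E)) : Prop :=
  ∃ H : Multigraph (Option V) E, G.IsSplitAssign v H ∧ G' = H.addEdge s(some v, none)

/-- Contract the non-loop edge `e` with endpoints `u ≠ v`: delete `e` and identify
`v` with `u`, keeping all other edges. -/
def contract [DecidableEq V] (G : Multigraph V E) (e : E) (u v : V) (huv : u ≠ v) :
    Multigraph {x : V // x ≠ v} {f : E // f ≠ e} :=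
  ⟨fun f => (G.ends f.1).map (fun x => if h : x = v then ⟨u, huv⟩ else ⟨x, h⟩)⟩

/-- Isomorphism of multigraphs: bijections of vertices and of edges compatible with
the incidence maps. -/
def IsIsomorphic (G : Multigraph V E) (H : Multigraph V' E') : Prop :=
  ∃ (σ : V ≃ V') (τ : E ≃ E'), ∀ e : E, H.ends (τ e) = (G.ends e).map σ

end Multigraph

/-- Let `G` be connected on at least two vertices, with distinct vertices `v` and `w`
joined by exactly one edge `e`, which is a bridge. Then in every graph obtained by
splitting `v` in two and joining the two new vertices by one new edge, `w` is joined
by exactly one edge to exactly one of the two new vertices, that edge (`e`) is still a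
bridge (so `w` shares no cycle with that vertex), and the resulting graph is not
edge-biconnected. -/
theorem split_still_not_biconnected (V E : Type) [Fintype V] [Fintype E]
    (G : Multigraph V E) (hG : G.Connected) (hcard : 2 ≤ Fintype.card V)
    (v w : V) (hvw : v ≠ w) (e : E) (he : G.ends e = s(v, w))
    (huniq : ∀ f : E, G.ends f = s(v, w) → f = e) (hbridge : G.IsBridge e)
    (G' : Multigraph (Option V) (Option E)) (hsplit : G.IsSplitAt v G') :
    ∃ x : Option V, (x = some v ∨ x = none) ∧ G'.ends (some e) = s(some w, x) ∧
      (∀ f : Option E, G'.ends f = s(some w, x) → f = some e) ∧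
      G'.IsBridge (some e) ∧ ¬ G'.Biconnected := by
  obtain ⟨H, hassign, rfl⟩ := hsplit
  -- projection lemma
  have hendsplit : ∀ {u : V} {u' : Option V}, Multigraph.SplitEnd v u u' → u'.getD v = u := by
    rintro u u' (⟨rfl, rfl | rfl⟩ | ⟨hu, rfl⟩) <;> rfl
  have hproj : ∀ f : E, (H.ends f).map (fun o => o.getD v) = G.ends f := by
    intro f
    obtain ⟨a, b, a', b', hG, hH, ha, hb⟩ := hassign f
    rw [hG, hH, Sym2.map_pair_eq, hendsplit ha, hendsplit hb]
  -- analyze the edge e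
  obtain ⟨a, b, a', b', hGe, hHe, ha, hb⟩ := hassign e
  rw [he] at hGe
  -- find x
  have key : ∃ x : Option V, (x = some v ∨ x = none) ∧ H.ends e = s(some w, x) := by
    rcases Sym2.eq_iff.1 hGe with ⟨hav, hbw⟩ | ⟨haw, hbv⟩
    · subst hav; subst hbw
      rcases ha with ⟨_, hx⟩ | ⟨hc, _⟩
      · rcases hb with ⟨hwv, _⟩ | ⟨_, rfl⟩
        · exact absurd hwv.symm hvw
        · exact ⟨a', hx, by rw [hHe, Sym2.eq_swap]⟩
      · exact absurd rfl hc
    · subst haw; subst hbv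
      rcases hb with ⟨_, hx⟩ | ⟨hc, _⟩
      · rcases ha with ⟨hwv, _⟩ | ⟨_, rfl⟩
        · exact absurd hwv.symm hvw
        · exact ⟨b', hx, hHe⟩
      · exact absurd rfl hc
  obtain ⟨x, hx, hex⟩ := key
  have hxv : x.getD v = v := by rcases hx with rfl | rfl <;> rfl
  have hends : (H.addEdge s(some v, none)).ends (some e) = s(some w, x) := hex
  -- uniqueness
  have huniq' : ∀ f : Option E, (H.addEdge s(some v, none)).ends f = s(some w, x) →
      f = some e := by
    rintro (_ | g) hf
    · exfalso
      have : (s(some v, none) : Sym2 (Option V)) = s(some w, x) := hf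
      rcases Sym2.eq_iff.1 this with ⟨h1, _⟩ | ⟨_, h2⟩
      · exact hvw (Option.some_injective _ h1)
      · exact absurd h2 (by simp)
    · have : G.ends g = s(v, w) := by
        rw [← hproj g]
        have : H.ends g = s(some w, x) := hf
        rw [this, Sym2.map_pair_eq]
        simp only [Option.getD_some, hxv, Sym2.eq_swap]
      rw [huniq g this]
  -- bridge
  have hbr : (H.addEdge s(some v, none)).IsBridge (some e) := by
    intro hconn
    apply hbridge
    have lift : ∀ p q : Option V,
        ((H.addEdge s(some v, none)).deleteEdge (some e)).Reachable p q →
        (G.deleteEdge e).Reachable (p.getD v) (q.getD v) := by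
      intro p q h
      induction h with
      | refl => exact Relation.ReflTransGen.refl
      | tail _ step ih =>
        rename_i b c _
        obtain ⟨⟨f, hf⟩, hends'⟩ := step
        match f with
        | none =>
          have : (s(some v, none) : Sym2 (Option V)) = s(b, c) := hends'
          have hbc : b.getD v = v ∧ c.getD v = v := by
            rcases Sym2.eq_iff.1 this.symm with ⟨rfl, rfl⟩ | ⟨rfl, rfl⟩ <;>
              exact ⟨rfl, rfl⟩
          rw [hbc.1] at ih
          rw [hbc.2]
          exact ih
        | some g =>
          have hge : g ≠ e := fun h => hf (by rw [h])
          have hHg : H.ends g = s(b, c) := hends'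
          have : (G.deleteEdge e).Adj (b.getD v) (c.getD v) :=
            ⟨⟨g, hge⟩, by
              show G.ends g = _
              rw [← hproj g, hHg, Sym2.map_pair_eq]⟩
          exact ih.tail this
    intro u1 u2
    have := lift (some u1) (some u2) (hconn (some u1) (some u2))
    simpa using this
  exact ⟨x, hx, hends, huniq', hbr, fun hbic => hbic.2 (some e) hbr⟩
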